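/- Let P ≻ 0 be n×n, F the n×n lower shift matrix, G = e₁, W = P − FᵀPF + FᵀPG(GᵀPG)⁻¹GᵀPF, and suppose W ≻ 0. Factor W = X_WᵀX_W and GᵀPG = x_Q² with X_W invertible and x_Q > 0. For any row vector M ∈ ℝ^{1×n} with MᵀM ≺ I, the matrix K = (GᵀPG)⁻¹GᵀPF + x_Q⁻¹ M X_W satisfies P − (F − GK)ᵀP(F − GK) = X_Wᵀ(I − MᵀM)X_W ≻ 0. -/

import Mathlib

open Matrix

lemma posdef_conj_aux {n : ℕ} {A B : Matrix (Fin n) (Fin n) ℝ}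
    (hA : A.PosDef) (hB : IsUnit B) : (Bᵀ * A * B).PosDef := by
  constructor
  · have h1 : Aᴴ = A := hA.1
    show (Bᵀ * A * B)ᴴ = _
    simp only [conjTranspose_mul, h1]
    simp [Matrix.mul_assoc, conjTranspose_eq_transpose_of_trivial]
  · have h4 := hA.conjTranspose_mul_mul_same (mulVec_injective_of_isUnit hB)
    rw [conjTranspose_eq_transpose_of_trivial] at h4
    exact h4.2

theorem stmt14 {n : ℕ} (hn : 0 < n)
    (F : Matrix (Fin n) (Fin n) ℝ)
    (hF : ∀ i j : Fin n, F i j = if (i : ℕ) = (j : ℕ) + 1 then 1 else 0)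
    (G : Matrix (Fin n) (Fin 1) ℝ)
    (hG : ∀ i : Fin n, G i 0 = if (i : ℕ) = 0 then 1 else 0)
    (P : Matrix (Fin n) (Fin n) ℝ) (hP : P.PosDef)
    (q : ℝ) (hq : q = (Gᵀ * P * G) 0 0)
    (W : Matrix (Fin n) (Fin n) ℝ)
    (hWdef : W = P - Fᵀ * P * F + q⁻¹ • (Fᵀ * P * G * (Gᵀ * P * F)))
    (hWpd : W.PosDef)
    (XW : Matrix (Fin n) (Fin n) ℝ) (hXW : IsUnit XW) (hWfac : W = XWᵀ * XW)
    (xQ : ℝ) (hxQ : 0 < xQ) (hxQsq : q = xQ ^ 2)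
    (M : Matrix (Fin 1) (Fin n) ℝ) (hMnorm : (1 - Mᵀ * M).PosDef)
    (K : Matrix (Fin 1) (Fin n) ℝ)
    (hK : K = q⁻¹ • (Gᵀ * P * F) + xQ⁻¹ • (M * XW)) :
    P - (F - G * K)ᵀ * P * (F - G * K) = XWᵀ * (1 - Mᵀ * M) * XW ∧
      (P - (F - G * K)ᵀ * P * (F - G * K)).PosDef := by
  have hxQ0 : xQ ≠ 0 := ne_of_gt hxQ
  have hq0 : q ≠ 0 := by rw [hxQsq]; positivity
  have hPsym : Pᵀ = P := by
    have := hP.1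
    have h' : P.IsSymm := by simpa [conjTranspose_eq_transpose_of_trivial] using this
    exact h'.eq
  have hPG : Gᵀ * P * G = q • (1 : Matrix (Fin 1) (Fin 1) ℝ) := by
    ext i j
    fin_cases i; fin_cases j
    simp [hq, Matrix.one_apply]
  set A : Matrix (Fin 1) (Fin n) ℝ := Gᵀ * P * F with hAdef
  set B : Matrix (Fin 1) (Fin n) ℝ := M * XW with hBdef
  have hFPG : Fᵀ * P * G = Aᵀ := by
    rw [hAdef, transpose_mul, transpose_mul, transpose_transpose, hPsym, Matrix.mul_assoc]
  have hmain : P - (F - G * K)ᵀ * P * (F - G * K) = XWᵀ * (1 - Mᵀ * M) * XW := by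
    have hexp : (F - G*K)ᵀ * P * (F - G*K)
        = Fᵀ*P*F - (Fᵀ*P*G)*K - Kᵀ*(Gᵀ*P*F) + Kᵀ*(Gᵀ*P*G)*K := by
      rw [transpose_sub, transpose_mul]
      noncomm_ring
      simp [Matrix.mul_assoc]
      abel
    rw [hexp, hFPG, hPG, hK]
    have hAK : Aᵀ * (q⁻¹ • A + xQ⁻¹ • B) = q⁻¹ • (Aᵀ*A) + xQ⁻¹ • (Aᵀ*B) := by
      rw [Matrix.mul_add, Matrix.mul_smul, Matrix.mul_smul]
    have hKA : (q⁻¹ • A + xQ⁻¹ • B)ᵀ * A = q⁻¹ • (Aᵀ*A) + xQ⁻¹ • (Bᵀ*A) := by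
      rw [transpose_add, transpose_smul, transpose_smul, Matrix.add_mul, Matrix.smul_mul,
        Matrix.smul_mul]
    have hKK : (q⁻¹ • A + xQ⁻¹ • B)ᵀ * (q • (1:Matrix (Fin 1) (Fin 1) ℝ)) * (q⁻¹ • A + xQ⁻¹ • B)
        = q⁻¹ • (Aᵀ*A) + xQ⁻¹ • (Aᵀ*B) + xQ⁻¹ • (Bᵀ*A) + (Bᵀ*B) := by
      rw [transpose_add, transpose_smul, transpose_smul]
      simp only [Matrix.add_mul, Matrix.mul_add, Matrix.smul_mul, Matrix.mul_smul, Matrix.mul_one,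
        smul_smul]
      rw [hxQsq]
      match_scalars <;> field_simp <;> ring
    rw [hAK, hKA, hKK]
    have hW2 : XWᵀ * (1 - Mᵀ * M) * XW = W - Bᵀ * B := by
      rw [Matrix.mul_sub, Matrix.mul_one, Matrix.sub_mul, ← hWfac, hBdef, transpose_mul]
      rw [Matrix.mul_assoc, Matrix.mul_assoc, Matrix.mul_assoc]
    rw [hW2, hWdef]
    have hAA : Fᵀ * P * G * (Gᵀ * P * F) = Aᵀ * A := by rw [hFPG]
    rw [hAA]
    abel
  refine ⟨hmain, ?_⟩
  rw [hmain]
  exact posdef_conj_aux hMnorm hXW
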